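/- Let k be a field and G a finite group with H^1(G, k) = 0. Let M be a finite-dimensional kG-module whose number m of trivial composition factors equals n = Σ_i dim_k H^1(G, W_i), the sum over all composition factors W_i of M. If M has no nonzero trivial submodule (i.e. M^G = 0), then H^1(G, M) = 0. -/

import Mathlib

open CategoryTheory

noncomputable section

/-- The `k`-linear representation of `G` attached to a module `M` over the group
algebra `k[G]` (defined on the type synonym `RestrictScalars k (MonoidAlgebra k G) M`). -/
def grpRep (k G : Type) [Field k] [Group G] (M : Type) [AddCommGroup M]
    [Module (MonoidAlgebra k G) M] : Rep k G :=
  @Rep.of k G _ _ _ _ (RestrictScalars.module k (MonoidAlgebra k G) M)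
    (Representation.ofModule (k := k) (G := G) M)

/-- The dimension over `k` of the first group cohomology `H¹(G, M)` of a `k[G]`-module `M`. -/
def h1Dim (k G : Type) [Field k] [Group G] (M : Type) [AddCommGroup M]
    [Module (MonoidAlgebra k G) M] : ℕ :=
  Module.finrank k (groupCohomology.H1 (grpRep k G M))

/-- A `k[G]`-module is trivial if it is isomorphic to the 1-dimensional trivial module `k`. -/
def IsTrivialFactor (k G : Type) [Field k] [Group G] (M : Type) [AddCommGroup M]
    [Module (MonoidAlgebra k G) M] : Prop :=
  Nonempty (grpRep k G M ≅ Rep.trivial k G k)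

/-- The subquotient `N'/N` attached to a pair of submodules `N ≤ N'`. -/
abbrev Subquot {k G : Type} [Field k] [Group G] {M : Type} [AddCommGroup M]
    [Module (MonoidAlgebra k G) M] (N N' : Submodule (MonoidAlgebra k G) M) : Type :=
  N' ⧸ Submodule.comap N'.subtype N

namespace St1

variable {k G : Type} [Field k] [Group G]

section compat

/-- The `k`-module structure on the restriction of scalars. -/
scoped instance rsModule (X : Type) [AddCommGroup X] [Module (MonoidAlgebra k G) X] :
    Module k (RestrictScalars k (MonoidAlgebra k G) X) :=
  RestrictScalars.module k (MonoidAlgebra k G) X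

/-- The same structure, over the additive monoid coming from the additive group. -/
scoped instance rsModule' (X : Type) [AddCommGroup X] [Module (MonoidAlgebra k G) X] :
    @Module k (RestrictScalars k (MonoidAlgebra k G) X) _
      (@AddCommGroup.toAddCommMonoid _ (instAddCommGroupRestrictScalars k (MonoidAlgebra k G) X)) :=
  RestrictScalars.module k (MonoidAlgebra k G) X

/-- 1-cocycles. -/
abbrev oneCocycles (A : Rep k G) : Submodule k (G → A.V) := groupCohomology.cocycles₁ A

/-- 1-coboundaries, as a submodule of the 1-cocycles. -/
abbrev oneCoboundaries (A : Rep k G) : Submodule k (oneCocycles A) :=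
  (groupCohomology.coboundaries₁ A).comap (oneCocycles A).subtype

/-- Concrete `H¹`. -/
abbrev H1 (A : Rep k G) := oneCocycles A ⧸ oneCoboundaries A

/-- The projection to concrete `H¹`. -/
abbrev H1_π (A : Rep k G) : oneCocycles A →ₗ[k] H1 A := (oneCoboundaries A).mkQ

/-- The 0th differential. -/
abbrev dZero (A : Rep k G) : A.V →ₗ[k] (G → A.V) := (groupCohomology.d₀₁ A).hom

lemma mem_oneCocycles_iff {A : Rep k G} (f : G → A.V) :
    f ∈ oneCocycles A ↔ ∀ g h : G, f (g * h) = A.ρ g (f h) + f g :=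
  groupCohomology.mem_cocycles₁_iff f

lemma mem_oneCoboundaries_iff {A : Rep k G} (f : oneCocycles A) :
    f ∈ oneCoboundaries A ↔ ∃ x : A.V, ∀ g : G, A.ρ g x - x = (f : G → A.V) g := by
  simp only [Submodule.mem_comap, Submodule.subtype_apply, groupCohomology.coboundaries₁,
    LinearMap.mem_range]
  constructor
  · rintro ⟨x, hx⟩; exact ⟨x, fun g => congrFun hx g⟩
  · rintro ⟨x, hx⟩; exact ⟨x, funext hx⟩

/-- Comparison map to Mathlib's `H¹`. -/
def h1ToCoh (A : Rep k G) : H1 A →ₗ[k] groupCohomology.H1 A :=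
  (oneCoboundaries A).liftQ (groupCohomology.H1π A).hom
    (fun x hx => (groupCohomology.H1π_eq_zero_iff x).2 hx)

lemma h1ToCoh_bij (A : Rep k G) : Function.Bijective (h1ToCoh A) := by
  constructor
  · rw [← LinearMap.ker_eq_bot, eq_bot_iff]
    intro x hx
    obtain ⟨c, rfl⟩ := Submodule.mkQ_surjective _ x
    rw [LinearMap.mem_ker] at hx
    rw [Submodule.mem_bot, Submodule.mkQ_apply, Submodule.Quotient.mk_eq_zero]
    exact (groupCohomology.H1π_eq_zero_iff c).1 hx
  · intro y
    induction y using groupCohomology.H1_induction_on with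
    | h c => exact ⟨Submodule.Quotient.mk c, rfl⟩

/-- Concrete `H¹` is Mathlib's `H¹`. -/
def h1CohEquiv (A : Rep k G) : H1 A ≃ₗ[k] groupCohomology.H1 A :=
  LinearEquiv.ofBijective _ (h1ToCoh_bij A)

lemma h1Dim_eq (X : Type) [AddCommGroup X] [Module (MonoidAlgebra k G) X] :
    h1Dim k G X = Module.finrank k (H1 (grpRep k G X)) :=
  (h1CohEquiv _).finrank_eq.symm

end compat

section maps

variable {X Y : Type} [AddCommGroup X] [Module (MonoidAlgebra k G) X]
  [AddCommGroup Y] [Module (MonoidAlgebra k G) Y]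

/-- The invariants of the module `X`, as a `k`-submodule. -/
abbrev inv (X : Type) [AddCommGroup X] [Module (MonoidAlgebra k G) X] :
    @Submodule k (RestrictScalars k (MonoidAlgebra k G) X) _
      (@AddCommGroup.toAddCommMonoid _ (instAddCommGroupRestrictScalars k (MonoidAlgebra k G) X))
      (rsModule' X) :=
  @Representation.invariants k G _ _ _ _ (RestrictScalars.module k (MonoidAlgebra k G) X)
    (Representation.ofModule (k := k) (G := G) X)

/-- Identity cast from the representation space to the module (they are defeq). -/
def down {X : Type} [AddCommGroup X] [Module (MonoidAlgebra k G) X]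
    (x : (grpRep k G X).V) : X := x

lemma grpRep_ρ_apply (g : G) (x : (grpRep k G X).V) :
    (grpRep k G X).ρ g x = MonoidAlgebra.single g (1 : k) •
      (show X from x) := rfl

/-- An `R`-linear map gives a `k`-linear map of the underlying spaces. -/
def rsMap (φ : X →ₗ[MonoidAlgebra k G] Y) :
    (grpRep k G X).V →ₗ[k] (grpRep k G Y).V where
  toFun x := φ x
  map_add' := φ.map_add
  map_smul' c x := φ.map_smul (algebraMap k (MonoidAlgebra k G) c) x

@[simp] lemma rsMap_apply (φ : X →ₗ[MonoidAlgebra k G] Y) (x : (grpRep k G X).V) :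
    rsMap φ x = φ x := rfl

lemma rsMap_equivariant (φ : X →ₗ[MonoidAlgebra k G] Y) (g : G) (x : (grpRep k G X).V) :
    rsMap φ ((grpRep k G X).ρ g x) = (grpRep k G Y).ρ g (rsMap φ x) :=
  φ.map_smul (MonoidAlgebra.single g (1 : k)) x

/-- Map on 1-cocycles induced by an `R`-linear map. -/
def cocyclesMap (φ : X →ₗ[MonoidAlgebra k G] Y) :
    oneCocycles (grpRep k G X) →ₗ[k] oneCocycles (grpRep k G Y) :=
  LinearMap.codRestrict _
    (((rsMap φ).compLeft G).comp (oneCocycles (grpRep k G X)).subtype)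
    (by
      intro c
      rw [mem_oneCocycles_iff]
      intro g h
      have hc := (mem_oneCocycles_iff (A := grpRep k G X) (c : G → (grpRep k G X).V)).1 c.2 g h
      show rsMap φ ((c : G → (grpRep k G X).V) (g * h)) = _
      rw [hc, map_add, rsMap_equivariant]
      rfl)

@[simp] lemma cocyclesMap_apply (φ : X →ₗ[MonoidAlgebra k G] Y)
    (c : oneCocycles (grpRep k G X)) (g : G) :
    ((cocyclesMap φ c : oneCocycles (grpRep k G Y)) : G → (grpRep k G Y).V) g
      = rsMap φ ((c : G → (grpRep k G X).V) g) := rfl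

lemma cocyclesMap_coboundary (φ : X →ₗ[MonoidAlgebra k G] Y)
    (c : oneCocycles (grpRep k G X)) (hc : c ∈ oneCoboundaries (grpRep k G X)) :
    cocyclesMap φ c ∈ oneCoboundaries (grpRep k G Y) := by
  rw [mem_oneCoboundaries_iff] at hc ⊢
  obtain ⟨x, hx⟩ := hc
  refine ⟨rsMap φ x, fun g => ?_⟩
  rw [← rsMap_equivariant φ g x, ← map_sub (rsMap φ), show (grpRep k G X).ρ g x - x = (c : G → (grpRep k G X).V) g from hx g]
  rfl

/-- Map on `H¹` induced by an `R`-linear map. -/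
def h1Map (φ : X →ₗ[MonoidAlgebra k G] Y) :
    H1 (grpRep k G X) →ₗ[k] H1 (grpRep k G Y) :=
  Submodule.mapQ _ _ (cocyclesMap φ) (fun c hc => cocyclesMap_coboundary φ c hc)

@[simp] lemma h1Map_π (φ : X →ₗ[MonoidAlgebra k G] Y) (c : oneCocycles (grpRep k G X)) :
    h1Map φ (H1_π (grpRep k G X) c) = H1_π (grpRep k G Y) (cocyclesMap φ c) := rfl

/-- Map on invariants induced by an `R`-linear map. -/
def invMap (φ : X →ₗ[MonoidAlgebra k G] Y) :
    inv (k := k) (G := G) X →ₗ[k] inv (k := k) (G := G) Y :=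
  (rsMap φ).restrict (fun x hx => by
    intro g
    have h := rsMap_equivariant φ g x
    rw [show (grpRep k G X).ρ g x = x from hx g] at h
    exact h.symm)


lemma h1Map_id : h1Map (LinearMap.id : X →ₗ[MonoidAlgebra k G] X) = LinearMap.id := by
  apply LinearMap.ext
  intro x
  induction x using Submodule.Quotient.induction_on with
  | H c => rfl

lemma invMap_id : invMap (LinearMap.id : X →ₗ[MonoidAlgebra k G] X) = LinearMap.id := by
  apply LinearMap.ext; intro x; rfl

end maps

section comp

variable {X Y Z : Type} [AddCommGroup X] [Module (MonoidAlgebra k G) X]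
  [AddCommGroup Y] [Module (MonoidAlgebra k G) Y]
  [AddCommGroup Z] [Module (MonoidAlgebra k G) Z]

lemma h1Map_comp (φ : X →ₗ[MonoidAlgebra k G] Y) (ψ : Y →ₗ[MonoidAlgebra k G] Z) :
    h1Map (ψ.comp φ) = (h1Map ψ).comp (h1Map φ) := by
  apply LinearMap.ext
  intro x
  induction x using Submodule.Quotient.induction_on with
  | H c => rfl

lemma invMap_comp (φ : X →ₗ[MonoidAlgebra k G] Y) (ψ : Y →ₗ[MonoidAlgebra k G] Z) :
    invMap (ψ.comp φ) = (invMap ψ).comp (invMap φ) := by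
  apply LinearMap.ext; intro x; rfl

end comp

section equiv

variable {X Y : Type} [AddCommGroup X] [Module (MonoidAlgebra k G) X]
  [AddCommGroup Y] [Module (MonoidAlgebra k G) Y]

/-- `H¹` equivalence from an `R`-linear equivalence. -/
def h1Equiv (e : X ≃ₗ[MonoidAlgebra k G] Y) :
    H1 (grpRep k G X) ≃ₗ[k] H1 (grpRep k G Y) :=
  LinearEquiv.ofLinear (h1Map e.toLinearMap) (h1Map e.symm.toLinearMap)
    (by rw [← h1Map_comp]
        have : (e.toLinearMap.comp e.symm.toLinearMap) = LinearMap.id := by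
          ext x; simp
        rw [this, h1Map_id])
    (by rw [← h1Map_comp]
        have : (e.symm.toLinearMap.comp e.toLinearMap) = LinearMap.id := by
          ext x; simp
        rw [this, h1Map_id])

lemma h1Dim_congr (e : X ≃ₗ[MonoidAlgebra k G] Y) : h1Dim k G X = h1Dim k G Y := by
  rw [h1Dim_eq, h1Dim_eq]; exact (h1Equiv e).finrank_eq

/-- invariants equivalence from an `R`-linear equivalence. -/
def invEquiv (e : X ≃ₗ[MonoidAlgebra k G] Y) :
    inv (k := k) (G := G) X ≃ₗ[k] inv (k := k) (G := G) Y :=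
  LinearEquiv.ofLinear (invMap e.toLinearMap) (invMap e.symm.toLinearMap)
    (by rw [← invMap_comp]
        have : (e.toLinearMap.comp e.symm.toLinearMap) = LinearMap.id := by
          ext x; simp
        rw [this, invMap_id])
    (by rw [← invMap_comp]
        have : (e.symm.toLinearMap.comp e.toLinearMap) = LinearMap.id := by
          ext x; simp
        rw [this, invMap_id])

lemma invDim_congr (e : X ≃ₗ[MonoidAlgebra k G] Y) :
    Module.finrank k (inv (k := k) (G := G) X)
      = Module.finrank k (inv (k := k) (G := G) Y) :=
  (invEquiv e).finrank_eq

/-- Rep iso from an `R`-linear equivalence. -/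
def repIso (e : X ≃ₗ[MonoidAlgebra k G] Y) : grpRep k G X ≅ grpRep k G Y :=
  Rep.mkIso
    { toLinearEquiv := (LinearEquiv.ofLinear (rsMap e.toLinearMap) (rsMap e.symm.toLinearMap)
      (by apply LinearMap.ext; intro x; show e (e.symm x) = x; exact e.apply_symm_apply x
      ) (by apply LinearMap.ext; intro x; show e.symm (e x) = x; exact e.symm_apply_apply x))
      isIntertwining' := (fun g => by
      apply LinearMap.ext
      intro x
      exact rsMap_equivariant e.toLinearMap g x) }

lemma isTrivialFactor_congr (e : X ≃ₗ[MonoidAlgebra k G] Y) :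
    IsTrivialFactor k G X ↔ IsTrivialFactor k G Y :=
  ⟨fun ⟨i⟩ => ⟨(repIso e).symm.trans i⟩, fun ⟨i⟩ => ⟨(repIso e).trans i⟩⟩

/-- finite dimensionality transfer along injective R-linear maps -/
lemma fd_of_injective (φ : X →ₗ[MonoidAlgebra k G] Y) (h : Function.Injective φ)
    [FiniteDimensional k (grpRep k G Y).V] : FiniteDimensional k (grpRep k G X).V :=
  FiniteDimensional.of_injective (rsMap φ) h

lemma fd_of_surjective (φ : X →ₗ[MonoidAlgebra k G] Y) (h : Function.Surjective φ)
    [FiniteDimensional k (grpRep k G X).V] : FiniteDimensional k (grpRep k G Y).V :=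
  Module.Finite.of_surjective (rsMap φ) h

end equiv

section delta

variable {M : Type} [AddCommGroup M] [Module (MonoidAlgebra k G) M]
  (A : Submodule (MonoidAlgebra k G) M)

/-- The `G → M`-level map underlying the connecting homomorphism. -/
def deltaAux (s : (grpRep k G (M ⧸ A)).V →ₗ[k] (grpRep k G M).V) :
    inv (k := k) (G := G) (M ⧸ A) →ₗ[k] (G → (grpRep k G M).V) :=
  (dZero (grpRep k G M)).comp (s.comp (inv (k := k) (G := G) (M ⧸ A)).subtype)

lemma deltaAux_apply (s : (grpRep k G (M ⧸ A)).V →ₗ[k] (grpRep k G M).V)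
    (q : inv (k := k) (G := G) (M ⧸ A)) (g : G) :
    down (deltaAux A s q g)
      = MonoidAlgebra.single g (1 : k) • down (s q.1) - down (s q.1) := rfl

lemma deltaAux_mem (s : (grpRep k G (M ⧸ A)).V →ₗ[k] (grpRep k G M).V)
    (hs : ∀ q, A.mkQ (s q) = q) (q : inv (k := k) (G := G) (M ⧸ A)) (g : G) :
    down (deltaAux A s q g) ∈ A := by
  rw [← Submodule.Quotient.mk_eq_zero, ← Submodule.mkQ_apply]
  have h1 : A.mkQ (MonoidAlgebra.single g (1 : k) • down (s q.1) - down (s q.1)) = 0 := by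
    rw [map_sub, map_smul]
    have hmk : A.mkQ (down (s q.1)) = down (k := k) (G := G) q.1 := hs q.1
    rw [hmk]
    have hq : MonoidAlgebra.single g (1 : k) • down (k := k) (G := G) q.1
        = down (k := k) (G := G) q.1 :=
      (Representation.mem_invariants _ _).1 q.2 g
    rw [hq, sub_self]
  exact h1

/-- The connecting map at the level of cocycles. -/
def deltaCocycle (s : (grpRep k G (M ⧸ A)).V →ₗ[k] (grpRep k G M).V)
    (hs : ∀ q, A.mkQ (s q) = q) :
    inv (k := k) (G := G) (M ⧸ A) →ₗ[k] oneCocycles (grpRep k G ↥A) where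
  toFun q := ⟨fun g => ⟨down (deltaAux A s q g), deltaAux_mem A s hs q g⟩, by
    refine (mem_oneCocycles_iff (A := grpRep k G ↥A) _).2 ?_
    intro g h
    apply Subtype.ext
    show down (deltaAux A s q (g * h))
      = MonoidAlgebra.single g (1 : k) • down (deltaAux A s q h) + down (deltaAux A s q g)
    rw [deltaAux_apply, deltaAux_apply, deltaAux_apply, smul_sub, smul_smul,
      MonoidAlgebra.single_mul_single, one_mul]
    abel⟩
  map_add' q q' := by
    apply Subtype.ext
    funext g
    apply Subtype.ext
    show down (deltaAux A s (q + q') g) = down (deltaAux A s q g) + down (deltaAux A s q' g)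
    rw [show deltaAux A s (q + q') = deltaAux A s q + deltaAux A s q' from map_add _ q q']
    rfl
  map_smul' c q := by
    apply Subtype.ext
    funext g
    apply Subtype.ext
    show down (deltaAux A s (c • q) g) = down (c • deltaAux A s q g)
    rw [show deltaAux A s (c • q) = c • deltaAux A s q from map_smul _ c q]
    rfl

lemma deltaCocycle_apply (s : (grpRep k G (M ⧸ A)).V →ₗ[k] (grpRep k G M).V)
    (hs : ∀ q, A.mkQ (s q) = q) (q : inv (k := k) (G := G) (M ⧸ A)) (g : G) :
    ((deltaCocycle A s hs q : oneCocycles (grpRep k G ↥A)) : G → (grpRep k G ↥A).V) g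
      = (⟨down (deltaAux A s q g), deltaAux_mem A s hs q g⟩ : ↥A) := rfl

/-- The connecting homomorphism `(M/A)^G → H¹(G, A)`. -/
def delta (s : (grpRep k G (M ⧸ A)).V →ₗ[k] (grpRep k G M).V)
    (hs : ∀ q, A.mkQ (s q) = q) :
    inv (k := k) (G := G) (M ⧸ A) →ₗ[k] H1 (grpRep k G ↥A) :=
  (H1_π (grpRep k G ↥A)).comp (deltaCocycle A s hs)

end delta

section la

open Module

lemma rank_chain {V0 V1 V2 V3 V4 V5 : Type}
    [AddCommGroup V0] [Module k V0] [FiniteDimensional k V0]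
    [AddCommGroup V1] [Module k V1] [FiniteDimensional k V1]
    [AddCommGroup V2] [Module k V2] [FiniteDimensional k V2]
    [AddCommGroup V3] [Module k V3] [FiniteDimensional k V3]
    [AddCommGroup V4] [Module k V4] [FiniteDimensional k V4]
    [AddCommGroup V5] [Module k V5] [FiniteDimensional k V5]
    (f1 : V0 →ₗ[k] V1) (f2 : V1 →ₗ[k] V2) (f3 : V2 →ₗ[k] V3)
    (f4 : V3 →ₗ[k] V4) (f5 : V4 →ₗ[k] V5)
    (h1 : Function.Injective f1)
    (e2 : LinearMap.ker f2 = LinearMap.range f1)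
    (e3 : LinearMap.ker f3 = LinearMap.range f2)
    (e4 : LinearMap.ker f4 = LinearMap.range f3)
    (e5 : LinearMap.ker f5 = LinearMap.range f4) :
    finrank k V4 + finrank k V2 + finrank k V0
      ≤ finrank k V5 + finrank k V3 + finrank k V1 := by
  have r2 := LinearMap.finrank_range_add_finrank_ker f2
  have r3 := LinearMap.finrank_range_add_finrank_ker f3
  have r4 := LinearMap.finrank_range_add_finrank_ker f4
  have r5 := LinearMap.finrank_range_add_finrank_ker f5
  have q2 : finrank k (LinearMap.ker f2) = finrank k (LinearMap.range f1) := by rw [e2]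
  have q3 : finrank k (LinearMap.ker f3) = finrank k (LinearMap.range f2) := by rw [e3]
  have q4 : finrank k (LinearMap.ker f4) = finrank k (LinearMap.range f3) := by rw [e4]
  have q5 : finrank k (LinearMap.ker f5) = finrank k (LinearMap.range f4) := by rw [e5]
  have h0 : finrank k V0 = finrank k (LinearMap.range f1) :=
    (LinearEquiv.ofInjective f1 h1).finrank_eq
  have hb : finrank k (LinearMap.range f5) ≤ finrank k V5 := Submodule.finrank_le _
  omega

end la

section sixterm

variable {M : Type} [AddCommGroup M] [Module (MonoidAlgebra k G) M]
  (A : Submodule (MonoidAlgebra k G) M)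

lemma inj_f1 : Function.Injective (invMap (k := k) (G := G) A.subtype) := by
  intro x y h
  apply Subtype.ext
  have h2 := congrArg (fun z : ↥(inv (k := k) (G := G) M) => down (k := k) (G := G) z.1) h
  exact A.injective_subtype h2

lemma mem_inv_of (X : Type) [AddCommGroup X] [Module (MonoidAlgebra k G) X]
    (x : X) (h : ∀ g : G, MonoidAlgebra.single g (1 : k) • x = x) :
    (show (grpRep k G X).V from x) ∈ inv (k := k) (G := G) X :=
  (Representation.mem_invariants (Representation.ofModule (k := k) (G := G) X) _).2 h

lemma inv_spec {X : Type} [AddCommGroup X] [Module (MonoidAlgebra k G) X]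
    (x : inv (k := k) (G := G) X) (g : G) :
    MonoidAlgebra.single g (1 : k) • (down (k := k) (G := G) x.1)
      = down (k := k) (G := G) x.1 :=
  (Representation.mem_invariants _ _).1 x.2 g

lemma ex2 : LinearMap.ker (invMap (k := k) (G := G) A.mkQ)
    = LinearMap.range (invMap (k := k) (G := G) A.subtype) := by
  ext x
  simp only [LinearMap.mem_ker, LinearMap.mem_range]
  constructor
  · intro hx
    have hx1 : A.mkQ (down (k := k) (G := G) x.1) = 0 :=
      congrArg (fun z : ↥(inv (k := k) (G := G) (M ⧸ A)) => down (k := k) (G := G) z.1) hx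
    have hmem : down (k := k) (G := G) x.1 ∈ A := by
      rwa [Submodule.mkQ_apply, Submodule.Quotient.mk_eq_zero] at hx1
    have hainv : ∀ g : G, MonoidAlgebra.single g (1 : k) •
        (⟨down (k := k) (G := G) x.1, hmem⟩ : ↥A) = ⟨down (k := k) (G := G) x.1, hmem⟩ := by
      intro g
      apply Subtype.ext
      show MonoidAlgebra.single g (1 : k) • down (k := k) (G := G) x.1
        = down (k := k) (G := G) x.1
      exact inv_spec x g
    refine ⟨⟨⟨down (k := k) (G := G) x.1, hmem⟩, mem_inv_of ↥A _ hainv⟩, ?_⟩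
    apply Subtype.ext
    rfl
  · rintro ⟨y, rfl⟩
    apply Subtype.ext
    show A.mkQ (A.subtype y.1) = 0
    rw [Submodule.mkQ_apply, Submodule.Quotient.mk_eq_zero]
    exact (y.1 : ↥A).2

variable (s : (grpRep k G (M ⧸ A)).V →ₗ[k] (grpRep k G M).V)
    (hs : ∀ q, A.mkQ (s q) = q)

lemma ex3 : LinearMap.ker (delta A s hs)
    = LinearMap.range (invMap (k := k) (G := G) A.mkQ) := by
  ext q
  simp only [LinearMap.mem_ker, LinearMap.mem_range]
  constructor
  · intro hq
    have hcb : deltaCocycle A s hs q ∈ oneCoboundaries (grpRep k G ↥A) := by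
      have h0 : Submodule.Quotient.mk (p := oneCoboundaries (grpRep k G ↥A))
          (deltaCocycle A s hs q) = 0 := hq
      exact (Submodule.Quotient.mk_eq_zero _).1 h0
    obtain ⟨a, ha⟩ := (mem_oneCoboundaries_iff _).1 hcb
    have haM : ∀ g : G, MonoidAlgebra.single g (1 : k) •
          (A.subtype (down (X := ↥A) (k := k) (G := G) a)) - A.subtype (down (X := ↥A) (k := k) (G := G) a)
        = MonoidAlgebra.single g (1 : k) • down (X := M) (k := k) (G := G) (s q.1)
          - down (X := M) (k := k) (G := G) (s q.1) := by
      intro g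
      exact congrArg (fun z : ↥A => A.subtype z) (ha g)
    have hminv : ∀ g : G, MonoidAlgebra.single g (1 : k) •
        (down (X := M) (k := k) (G := G) (s q.1) - A.subtype (down (X := ↥A) (k := k) (G := G) a))
        = down (X := M) (k := k) (G := G) (s q.1) - A.subtype (down (X := ↥A) (k := k) (G := G) a) := by
      intro g
      have h1 := haM g
      have h2 : MonoidAlgebra.single g (1 : k) • down (X := M) (k := k) (G := G) (s q.1)
            - MonoidAlgebra.single g (1 : k) • A.subtype (down (X := ↥A) (k := k) (G := G) a)
            - (down (X := M) (k := k) (G := G) (s q.1) - A.subtype (down (X := ↥A) (k := k) (G := G) a))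
          = (MonoidAlgebra.single g (1 : k) • down (X := M) (k := k) (G := G) (s q.1)
              - down (X := M) (k := k) (G := G) (s q.1))
            - (MonoidAlgebra.single g (1 : k) • A.subtype (down (X := ↥A) (k := k) (G := G) a)
              - A.subtype (down (X := ↥A) (k := k) (G := G) a)) := by abel
      rw [← h1, sub_self] at h2
      rw [smul_sub]
      exact sub_eq_zero.1 h2
    refine ⟨⟨show (grpRep k G M).V from
        down (X := M) (k := k) (G := G) (s q.1) - A.subtype (down (X := ↥A) (k := k) (G := G) a),
        mem_inv_of M _ hminv⟩, ?_⟩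
    apply Subtype.ext
    show A.mkQ (down (X := M) (k := k) (G := G) (s q.1) - A.subtype (down (X := ↥A) (k := k) (G := G) a))
      = down (X := M ⧸ A) (k := k) (G := G) q.1
    rw [map_sub]
    have h3 : A.mkQ (down (X := M) (k := k) (G := G) (s q.1)) = down (X := M ⧸ A) (k := k) (G := G) q.1 := hs q.1
    have h4 : A.mkQ (A.subtype (down (X := ↥A) (k := k) (G := G) a)) = 0 := by
      rw [Submodule.mkQ_apply, Submodule.Quotient.mk_eq_zero]
      exact (down (X := ↥A) (k := k) (G := G) a).2
    rw [h3, h4, sub_zero]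
  · rintro ⟨y, rfl⟩
    have hamem : down (X := M) (k := k) (G := G) (s ((invMap (k := k) (G := G) A.mkQ y).1))
        - down (X := M) (k := k) (G := G) y.1 ∈ A := by
      rw [← Submodule.Quotient.mk_eq_zero, ← Submodule.mkQ_apply, map_sub]
      have h3 : A.mkQ (down (X := M) (k := k) (G := G) (s ((invMap (k := k) (G := G) A.mkQ y).1)))
          = down (X := M ⧸ A) (k := k) (G := G) ((invMap (k := k) (G := G) A.mkQ y).1) :=
        hs ((invMap (k := k) (G := G) A.mkQ y).1)
      rw [h3]
      rw [show down (X := M ⧸ A) (k := k) (G := G) ((invMap (k := k) (G := G) A.mkQ y).1)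
        = A.mkQ (down (X := M) (k := k) (G := G) y.1) from rfl]
      rw [sub_self]
    have hmem2 : deltaCocycle A s hs (invMap (k := k) (G := G) A.mkQ y)
        ∈ oneCoboundaries (grpRep k G ↥A) := by
      apply (mem_oneCoboundaries_iff _).2
      refine ⟨show (grpRep k G ↥A).V from
        ⟨down (X := M) (k := k) (G := G) (s ((invMap (k := k) (G := G) A.mkQ y).1))
          - down (X := M) (k := k) (G := G) y.1, hamem⟩, fun g => ?_⟩
      apply Subtype.ext
      show MonoidAlgebra.single g (1 : k) •
          (down (X := M) (k := k) (G := G) (s ((invMap (k := k) (G := G) A.mkQ y).1))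
            - down (X := M) (k := k) (G := G) y.1)
          - (down (X := M) (k := k) (G := G) (s ((invMap (k := k) (G := G) A.mkQ y).1))
            - down (X := M) (k := k) (G := G) y.1)
        = MonoidAlgebra.single g (1 : k) •
            down (X := M) (k := k) (G := G) (s ((invMap (k := k) (G := G) A.mkQ y).1))
          - down (X := M) (k := k) (G := G) (s ((invMap (k := k) (G := G) A.mkQ y).1))
      rw [smul_sub, inv_spec y g]
      abel
    exact (Submodule.Quotient.mk_eq_zero _).2 hmem2

lemma delta_eq_of (q : inv (k := k) (G := G) (M ⧸ A)) (c : oneCocycles (grpRep k G ↥A))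
    (mm : M) (hq1 : down (X := M ⧸ A) (k := k) (G := G) q.1 = A.mkQ mm)
    (hb' : ∀ g : G, MonoidAlgebra.single g (1 : k) • mm - mm = A.subtype (down (X := ↥A) (k := k) (G := G) (c g))) :
    delta A s hs q = (oneCoboundaries (grpRep k G ↥A)).mkQ c := by
  have hamem : down (X := M) (k := k) (G := G) (s q.1) - mm ∈ A := by
    rw [← Submodule.Quotient.mk_eq_zero, ← Submodule.mkQ_apply, map_sub]
    have h3 : A.mkQ (down (X := M) (k := k) (G := G) (s q.1)) = down (X := M ⧸ A) (k := k) (G := G) q.1 := hs q.1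
    rw [h3, hq1, sub_self]
  have hdiff : deltaCocycle A s hs q - c ∈ oneCoboundaries (grpRep k G ↥A) := by
    apply (mem_oneCoboundaries_iff _).2
    refine ⟨show (grpRep k G ↥A).V from
      ⟨down (X := M) (k := k) (G := G) (s q.1) - mm, hamem⟩, fun g => ?_⟩
    apply Subtype.ext
    show MonoidAlgebra.single g (1 : k) • (down (X := M) (k := k) (G := G) (s q.1) - mm) - (down (X := M) (k := k) (G := G) (s q.1) - mm)
      = (MonoidAlgebra.single g (1 : k) • down (X := M) (k := k) (G := G) (s q.1) - down (X := M) (k := k) (G := G) (s q.1))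
        - A.subtype (down (X := ↥A) (k := k) (G := G) (c g))
    rw [← hb' g, smul_sub]
    abel
  exact (Submodule.Quotient.eq _).2 hdiff

lemma ex4 : LinearMap.ker (h1Map (k := k) (G := G) A.subtype)
    = LinearMap.range (delta A s hs) := by
  ext x
  simp only [LinearMap.mem_ker, LinearMap.mem_range]
  constructor
  · intro hx
    obtain ⟨c, rfl⟩ := Submodule.mkQ_surjective _ x
    have hcb : cocyclesMap (k := k) (G := G) A.subtype c
        ∈ oneCoboundaries (grpRep k G M) := by
      have h0 : Submodule.Quotient.mk (p := oneCoboundaries (grpRep k G M))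
          (cocyclesMap (k := k) (G := G) A.subtype c) = 0 := hx
      exact (Submodule.Quotient.mk_eq_zero _).1 h0
    obtain ⟨mm, hb⟩ := (mem_oneCoboundaries_iff _).1 hcb
    have hb' : ∀ g : G, MonoidAlgebra.single g (1 : k) • down (X := M) (k := k) (G := G) mm
        - down (X := M) (k := k) (G := G) mm = A.subtype (down (X := ↥A) (k := k) (G := G) (c g)) :=
      fun g => hb g
    have hqinv : ∀ g : G, MonoidAlgebra.single g (1 : k) •
        (A.mkQ (down (X := M) (k := k) (G := G) mm)) = A.mkQ (down (X := M) (k := k) (G := G) mm) := by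
      intro g
      have h2 : A.mkQ (MonoidAlgebra.single g (1 : k) • down (X := M) (k := k) (G := G) mm
          - down (X := M) (k := k) (G := G) mm) = 0 := by
        rw [hb' g, Submodule.mkQ_apply, Submodule.Quotient.mk_eq_zero]
        exact (down (X := ↥A) (k := k) (G := G) (c g)).2
      rw [map_sub, map_smul, sub_eq_zero] at h2
      exact h2
    refine ⟨⟨show (grpRep k G (M ⧸ A)).V from A.mkQ (down (X := M) (k := k) (G := G) mm),
      mem_inv_of (M ⧸ A) _ hqinv⟩, ?_⟩
    exact delta_eq_of A s hs _ c (down (X := M) (k := k) (G := G) mm) rfl hb'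
  · rintro ⟨q, rfl⟩
    have hmem2 : cocyclesMap (k := k) (G := G) A.subtype (deltaCocycle A s hs q)
        ∈ oneCoboundaries (grpRep k G M) := by
      apply (mem_oneCoboundaries_iff _).2
      exact ⟨s q.1, fun g => rfl⟩
    exact (Submodule.Quotient.mk_eq_zero _).2 hmem2

lemma ex5 : LinearMap.ker (h1Map (k := k) (G := G) A.mkQ)
    = LinearMap.range (h1Map (k := k) (G := G) A.subtype) := by
  ext x
  simp only [LinearMap.mem_ker, LinearMap.mem_range]
  constructor
  · intro hx
    obtain ⟨c, rfl⟩ := Submodule.mkQ_surjective _ x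
    have hcb : cocyclesMap (k := k) (G := G) A.mkQ c
        ∈ oneCoboundaries (grpRep k G (M ⧸ A)) := by
      have h0 : Submodule.Quotient.mk (p := oneCoboundaries (grpRep k G (M ⧸ A)))
          (cocyclesMap (k := k) (G := G) A.mkQ c) = 0 := hx
      exact (Submodule.Quotient.mk_eq_zero _).1 h0
    obtain ⟨x₀, hx₀⟩ := (mem_oneCoboundaries_iff _).1 hcb
    obtain ⟨m, hmq⟩ := A.mkQ_surjective (down (X := M ⧸ A) (k := k) (G := G) x₀)
    have hx₀' : ∀ g : G, MonoidAlgebra.single g (1 : k) • down (X := M ⧸ A) (k := k) (G := G) x₀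
        - down (X := M ⧸ A) (k := k) (G := G) x₀ = A.mkQ (down (X := M) (k := k) (G := G) (c g)) :=
      fun g => hx₀ g
    have hmem : ∀ g : G, down (X := M) (k := k) (G := G) (c g)
        - (MonoidAlgebra.single g (1 : k) • m - m) ∈ A := by
      intro g
      rw [← Submodule.Quotient.mk_eq_zero, ← Submodule.mkQ_apply, map_sub, map_sub,
        map_smul, hmq, ← hx₀' g]
      abel
    have hcoc : (fun g => (⟨down (X := M) (k := k) (G := G) (c g)
        - (MonoidAlgebra.single g (1 : k) • m - m), hmem g⟩ : ↥A))
        ∈ oneCocycles (grpRep k G ↥A) := by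
      refine (mem_oneCocycles_iff (A := grpRep k G ↥A) _).2 ?_
      intro g h
      apply Subtype.ext
      have hc' : down (X := M) (k := k) (G := G) (c (g * h))
          = MonoidAlgebra.single g (1 : k) • down (X := M) (k := k) (G := G) (c h)
            + down (X := M) (k := k) (G := G) (c g) :=
        (mem_oneCocycles_iff ((c : G → (grpRep k G M).V))).1 c.2 g h
      show down (X := M) (k := k) (G := G) (c (g * h))
          - (MonoidAlgebra.single (g * h) (1 : k) • m - m)
        = MonoidAlgebra.single g (1 : k) • (down (X := M) (k := k) (G := G) (c h)
            - (MonoidAlgebra.single h (1 : k) • m - m))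
          + (down (X := M) (k := k) (G := G) (c g)
            - (MonoidAlgebra.single g (1 : k) • m - m))
      rw [hc', smul_sub, smul_sub, smul_smul, MonoidAlgebra.single_mul_single, one_mul]
      abel
    refine ⟨Submodule.Quotient.mk (⟨_, hcoc⟩ : oneCocycles (grpRep k G ↥A)), ?_⟩
    have hdiff : cocyclesMap (k := k) (G := G) A.subtype ⟨_, hcoc⟩ - c
        ∈ oneCoboundaries (grpRep k G M) := by
      apply (mem_oneCoboundaries_iff _).2
      refine ⟨show (grpRep k G M).V from -m, fun g => ?_⟩
      show MonoidAlgebra.single g (1 : k) • (-m) - (-m)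
        = (down (X := M) (k := k) (G := G) (c g) - (MonoidAlgebra.single g (1 : k) • m - m))
          - down (X := M) (k := k) (G := G) (c g)
      rw [smul_neg]
      abel
    exact (Submodule.Quotient.eq _).2 hdiff
  · rintro ⟨y, rfl⟩
    obtain ⟨c, rfl⟩ := Submodule.mkQ_surjective _ y
    have hmem2 : cocyclesMap (k := k) (G := G) A.mkQ
        (cocyclesMap (k := k) (G := G) A.subtype c)
        ∈ oneCoboundaries (grpRep k G (M ⧸ A)) := by
      apply (mem_oneCoboundaries_iff _).2
      refine ⟨0, fun g => ?_⟩
      have h5 : A.mkQ (A.subtype (down (X := ↥A) (k := k) (G := G) (c g))) = 0 := by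
        rw [Submodule.mkQ_apply, Submodule.Quotient.mk_eq_zero]
        exact (down (X := ↥A) (k := k) (G := G) (c g)).2
      show MonoidAlgebra.single g (1 : k) • (0 : M ⧸ A) - 0
        = A.mkQ (A.subtype (down (X := ↥A) (k := k) (G := G) (c g)))
      rw [h5, smul_zero, sub_zero]
    exact (Submodule.Quotient.mk_eq_zero _).2 hmem2

end sixterm

section fd

variable [Finite G] {M : Type} [AddCommGroup M] [Module (MonoidAlgebra k G) M]

set_option synthInstance.maxHeartbeats 1000000 in
lemma fd_H1 (X : Type) [AddCommGroup X] [Module (MonoidAlgebra k G) X]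
    [FiniteDimensional k (grpRep k G X).V] :
    FiniteDimensional k (H1 (grpRep k G X)) := by
  haveI h0 : FiniteDimensional k (grpRep k G X) :=
    ‹FiniteDimensional k (grpRep k G X).V›
  haveI h1 : FiniteDimensional k (G → (grpRep k G X : Type)) := by infer_instance
  haveI h2 : FiniteDimensional k ↥(oneCocycles (grpRep k G X)) := by infer_instance
  exact (inferInstance : FiniteDimensional k
    (↥(oneCocycles (grpRep k G X)) ⧸ oneCoboundaries (grpRep k G X)))

omit [Finite G] in
lemma fd_inv (X : Type) [AddCommGroup X] [Module (MonoidAlgebra k G) X]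
    [FiniteDimensional k (grpRep k G X).V] :
    FiniteDimensional k (inv (k := k) (G := G) X) := by
  haveI h0 : FiniteDimensional k (RestrictScalars k (MonoidAlgebra k G) X) :=
    ‹FiniteDimensional k (grpRep k G X).V›
  infer_instance

/-- The key inequality coming from the six-term exact sequence. -/
lemma sixterm_ineq (A : Submodule (MonoidAlgebra k G) M)
    [FiniteDimensional k (grpRep k G M).V] :
    Module.finrank k (H1 (grpRep k G M))
      + Module.finrank k (inv (k := k) (G := G) (M ⧸ A))
      + Module.finrank k (inv (k := k) (G := G) ↥A)
    ≤ Module.finrank k (H1 (grpRep k G (M ⧸ A)))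
      + Module.finrank k (H1 (grpRep k G ↥A))
      + Module.finrank k (inv (k := k) (G := G) M) := by
  haveI fdA : FiniteDimensional k (grpRep k G ↥A).V :=
    fd_of_injective A.subtype A.injective_subtype
  haveI fdQ : FiniteDimensional k (grpRep k G (M ⧸ A)).V :=
    fd_of_surjective A.mkQ A.mkQ_surjective
  haveI := fd_H1 (k := k) (G := G) M
  haveI := fd_H1 (k := k) (G := G) ↥A
  haveI := fd_H1 (k := k) (G := G) (M ⧸ A)
  haveI := fd_inv (k := k) (G := G) M
  haveI := fd_inv (k := k) (G := G) ↥A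
  haveI := fd_inv (k := k) (G := G) (M ⧸ A)
  obtain ⟨s, hsc⟩ := (rsMap (k := k) (G := G) A.mkQ).exists_rightInverse_of_surjective
    (LinearMap.range_eq_top.2 (A.mkQ_surjective))
  have hs : ∀ q, A.mkQ (s q) = q := fun q => LinearMap.congr_fun hsc q
  exact rank_chain
    (invMap (k := k) (G := G) A.subtype) (invMap (k := k) (G := G) A.mkQ)
    (delta A s hs) (h1Map (k := k) (G := G) A.subtype) (h1Map (k := k) (G := G) A.mkQ)
    (inj_f1 A) (ex2 A) (ex3 A s hs) (ex4 A s hs) (ex5 A)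

end fd

section trivialfac

variable (X : Type) [AddCommGroup X] [Module (MonoidAlgebra k G) X]

lemma one_le_finrank_inv [FiniteDimensional k (grpRep k G X).V]
    (h : IsTrivialFactor k G X) :
    1 ≤ Module.finrank k (inv (k := k) (G := G) X) := by
  obtain ⟨i⟩ := h
  let le := (Representation.equivOfIso i).toLinearEquiv
  let oneT : (Rep.trivial k G k).V := show k from 1
  have hmem : (le.symm oneT : (grpRep k G X).V) ∈ inv (k := k) (G := G) X := by
    apply (Representation.mem_invariants (Representation.ofModule (k := k) (G := G) X) _).2
    intro g
    have hc := Rep.hom_comm_apply i.inv g oneT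
    rw [Rep.trivial_ρ_apply] at hc
    have hsymm : (le.symm oneT : (grpRep k G X).V) = i.inv.hom oneT := rfl
    rw [hsymm]
    exact hc.symm
  have hne : (le.symm oneT : (grpRep k G X).V) ≠ 0 := by
    intro h0
    have h1 := congrArg le h0
    rw [le.apply_symm_apply, map_zero] at h1
    exact one_ne_zero (show (1 : k) = 0 from h1)
  haveI := fd_inv (k := k) (G := G) X
  rw [Nat.one_le_iff_ne_zero]
  intro hzero
  haveI hsub : Subsingleton (inv (k := k) (G := G) X) :=
    Module.finrank_zero_iff.1 hzero
  have hel := Subsingleton.elim (⟨_, hmem⟩ : inv (k := k) (G := G) X) 0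
  exact hne (Subtype.ext_iff.1 hel)

end trivialfac

section subquot

variable {M : Type} [AddCommGroup M] [Module (MonoidAlgebra k G) M]

/-- `Subquot ⊥ A ≃ A`. -/
def subquotBotEquiv (A B : Submodule (MonoidAlgebra k G) M) (h : B = ⊥) :
    Subquot B A ≃ₗ[MonoidAlgebra k G] ↥A :=
  Submodule.quotEquivOfEqBot _ (by rw [h, Submodule.comap_bot, Submodule.ker_subtype])

/-- Third isomorphism theorem for subquotients. -/
def subquotMapEquiv (A P P' : Submodule (MonoidAlgebra k G) M)
    (hAP : A ≤ P) (hPP' : P ≤ P') :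
    Subquot (P.map A.mkQ) (P'.map A.mkQ) ≃ₗ[MonoidAlgebra k G] Subquot P P' := by
  have hres : ∀ x ∈ P', A.mkQ x ∈ P'.map A.mkQ := fun x hx => Submodule.mem_map_of_mem hx
  let F : ↥P' →ₗ[MonoidAlgebra k G] Subquot (P.map A.mkQ) (P'.map A.mkQ) :=
    (Submodule.mkQ _).comp (A.mkQ.restrict hres)
  have hsurj : Function.Surjective F := by
    intro z
    obtain ⟨y, rfl⟩ := Submodule.mkQ_surjective _ z
    obtain ⟨x, hx, hxy⟩ := Submodule.mem_map.1 y.2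
    refine ⟨⟨x, hx⟩, ?_⟩
    show Submodule.mkQ _ (A.mkQ.restrict hres ⟨x, hx⟩) = Submodule.mkQ _ y
    congr 1
    exact Subtype.ext hxy
  have hker : LinearMap.ker F = Submodule.comap P'.subtype P := by
    ext x
    simp only [LinearMap.mem_ker, Submodule.mem_comap]
    constructor
    · intro hx
      have h1 : A.mkQ.restrict hres x ∈ Submodule.comap
          (P'.map A.mkQ).subtype (P.map A.mkQ) := by
        rwa [← Submodule.Quotient.mk_eq_zero (p := Submodule.comap
          (P'.map A.mkQ).subtype (P.map A.mkQ)), ← Submodule.mkQ_apply]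
      have h2 : A.mkQ x.1 ∈ P.map A.mkQ := h1
      obtain ⟨p, hp, hpx⟩ := Submodule.mem_map.1 h2
      have h3 : p - x.1 ∈ A := (Submodule.Quotient.eq A).1 hpx
      have h4 : x.1 = p - (p - x.1) := by abel
      have h5 : P'.subtype x = p - (p - x.1) := h4
      show P'.subtype x ∈ P
      rw [h5]
      exact Submodule.sub_mem _ hp (hAP h3)
    · intro hx
      show Submodule.mkQ _ (A.mkQ.restrict hres x) = 0
      rw [Submodule.mkQ_apply, Submodule.Quotient.mk_eq_zero]
      exact Submodule.mem_map_of_mem hx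
  exact (F.quotKerEquivOfSurjective hsurj).symm.trans (Submodule.quotEquivOfEq _ _ hker)

end subquot

section counting

lemma card_subtype_fin (n : ℕ) (T : Fin n → Prop) [DecidablePred T] :
    Nat.card {i // T i} = ∑ i : Fin n, if T i then 1 else 0 := by
  rw [Nat.card_eq_fintype_card, Fintype.card_subtype, Finset.card_filter]

end counting

section main

variable [Finite G]

lemma main (r : ℕ) :
    ∀ (M : Type) [AddCommGroup M] [Module (MonoidAlgebra k G) M]
      [FiniteDimensional k (grpRep k G M).V]
      (N : Fin (r + 1) → Submodule (MonoidAlgebra k G) M),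
      Monotone N → N 0 = ⊥ → N (Fin.last r) = ⊤ →
      Module.finrank k (H1 (grpRep k G M))
          + Nat.card {i : Fin r // IsTrivialFactor k G (Subquot (N i.castSucc) (N i.succ))}
        ≤ (∑ i : Fin r, h1Dim k G (Subquot (N i.castSucc) (N i.succ)))
          + Module.finrank k (inv (k := k) (G := G) M) := by
  induction r with
  | zero =>
    intro M _ _ _ N hmono hbot htop
    haveI hsM : Subsingleton M := by
      constructor
      intro a b
      have ha : a ∈ N 0 := by
        rw [show (0 : Fin 1) = Fin.last 0 from rfl, htop]; trivial
      have hb : b ∈ N 0 := by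
        rw [show (0 : Fin 1) = Fin.last 0 from rfl, htop]; trivial
      rw [hbot, Submodule.mem_bot] at ha hb
      rw [ha, hb]
    haveI hsV : Subsingleton (grpRep k G M : Type) := hsM
    haveI hH1ss : Subsingleton (H1 (grpRep k G M)) := by
      constructor
      intro a b
      obtain ⟨x, rfl⟩ := Submodule.mkQ_surjective _ a
      obtain ⟨y, rfl⟩ := Submodule.mkQ_surjective _ b
      have hxy : x = y := by
        apply Subtype.ext
        funext g
        exact Subsingleton.elim _ _
      rw [hxy]
    haveI := fd_H1 (k := k) (G := G) M
    have h0 : Module.finrank k (H1 (grpRep k G M)) = 0 :=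
      Module.finrank_zero_iff.2 hH1ss
    have hc : Nat.card {i : Fin 0 //
        IsTrivialFactor k G (Subquot (N i.castSucc) (N i.succ))} = 0 :=
      Nat.card_of_isEmpty
    rw [h0, hc]
    exact Nat.zero_le _
  | succ r ih =>
    intro M _ _ _ N hmono hbot htop
    classical
    haveI fdA : FiniteDimensional k (grpRep k G ↥(N 1)).V :=
      fd_of_injective (N 1).subtype (N 1).injective_subtype
    haveI fdQ : FiniteDimensional k (grpRep k G (M ⧸ N 1)).V :=
      fd_of_surjective (N 1).mkQ (N 1).mkQ_surjective
    have key := sixterm_ineq (M := M) (N 1)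
    have h1le : ∀ j : Fin (r + 1), (1 : Fin (r + 2)) ≤ j.succ := by
      intro j
      rw [← Fin.succ_zero_eq_one]
      exact Fin.succ_le_succ_iff.2 (Fin.zero_le _)
    have hmono' : Monotone (fun i : Fin (r + 1) => (N i.succ).map (N 1).mkQ) := by
      intro i j hij
      exact Submodule.map_mono (hmono (Fin.succ_le_succ_iff.2 hij))
    have hbot' : ((fun i : Fin (r + 1) => (N i.succ).map (N 1).mkQ) 0) = ⊥ := by
      show (N (0 : Fin (r + 1)).succ).map (N 1).mkQ = ⊥
      rw [Fin.succ_zero_eq_one, eq_bot_iff]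
      intro x hx
      obtain ⟨y, hy, rfl⟩ := Submodule.mem_map.1 hx
      rw [Submodule.mem_bot, Submodule.mkQ_apply, Submodule.Quotient.mk_eq_zero]
      exact hy
    have htop' : ((fun i : Fin (r + 1) => (N i.succ).map (N 1).mkQ) (Fin.last r)) = ⊤ := by
      show (N (Fin.last r).succ).map (N 1).mkQ = ⊤
      rw [Fin.succ_last, htop, Submodule.map_top, Submodule.range_mkQ]
    have IH := ih (M ⧸ N 1) (fun i : Fin (r + 1) => (N i.succ).map (N 1).mkQ)
      hmono' hbot' htop'
    -- the 0-th factor of the M-chain is A = N 1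
    have e0 : Subquot (N (0 : Fin (r + 1)).castSucc) (N (0 : Fin (r + 1)).succ)
        ≃ₗ[MonoidAlgebra k G] ↥(N 1) :=
      subquotBotEquiv (N (0 : Fin (r + 1)).succ) (N (0 : Fin (r + 1)).castSucc)
        (by rw [Fin.castSucc_zero]; exact hbot)
    have hfac0 : h1Dim k G (Subquot (N (0 : Fin (r + 1)).castSucc)
          (N (0 : Fin (r + 1)).succ))
        = Module.finrank k (H1 (grpRep k G ↥(N 1))) :=
      (h1Dim_congr e0).trans (h1Dim_eq _)
    -- factor equivalences between the quotient chain and the shifted M-chain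
    have eqv : ∀ i : Fin r,
        Subquot ((N (i.castSucc).succ).map (N 1).mkQ) ((N (i.succ).succ).map (N 1).mkQ)
          ≃ₗ[MonoidAlgebra k G] Subquot (N (i.succ).castSucc) (N (i.succ).succ) :=
      fun i => subquotMapEquiv (N 1) (N (i.castSucc).succ) (N (i.succ).succ)
        (hmono (h1le i.castSucc))
        (hmono (Fin.succ_le_succ_iff.2 (Fin.castSucc_le_succ i)))
    have hsum : ∀ i : Fin r,
        h1Dim k G (Subquot ((N (i.castSucc).succ).map (N 1).mkQ)
            ((N (i.succ).succ).map (N 1).mkQ))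
          = h1Dim k G (Subquot (N (i.succ).castSucc) (N (i.succ).succ)) :=
      fun i => h1Dim_congr (eqv i)
    have htriv : ∀ i : Fin r,
        IsTrivialFactor k G (Subquot ((N (i.castSucc).succ).map (N 1).mkQ)
            ((N (i.succ).succ).map (N 1).mkQ))
          ↔ IsTrivialFactor k G (Subquot (N (i.succ).castSucc) (N (i.succ).succ)) :=
      fun i => isTrivialFactor_congr (eqv i)
    -- counting
    have hcardM := card_subtype_fin (r + 1)
      (fun i => IsTrivialFactor k G (Subquot (N i.castSucc) (N i.succ)))
    have hcardQ := card_subtype_fin r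
      (fun i => IsTrivialFactor k G (Subquot
        ((N (i.castSucc).succ).map (N 1).mkQ) ((N (i.succ).succ).map (N 1).mkQ)))
    rw [hcardQ] at IH
    have htsum : (∑ i : Fin r, if IsTrivialFactor k G (Subquot
          ((N (i.castSucc).succ).map (N 1).mkQ) ((N (i.succ).succ).map (N 1).mkQ))
          then 1 else 0)
        = ∑ i : Fin r, if IsTrivialFactor k G
            (Subquot (N (i.succ).castSucc) (N (i.succ).succ)) then 1 else 0 :=
      Finset.sum_congr rfl (fun i _ => by rw [if_congr (htriv i) rfl rfl])
    have hsumQ : (∑ i : Fin r, h1Dim k G (Subquot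
          ((N (i.castSucc).succ).map (N 1).mkQ) ((N (i.succ).succ).map (N 1).mkQ)))
        = ∑ i : Fin r, h1Dim k G (Subquot (N (i.succ).castSucc) (N (i.succ).succ)) :=
      Finset.sum_congr rfl (fun i _ => hsum i)
    rw [htsum, hsumQ] at IH
    -- step for the 0-th factor
    have step0 : Module.finrank k (H1 (grpRep k G ↥(N 1)))
        + (if IsTrivialFactor k G (Subquot (N (0 : Fin (r + 1)).castSucc)
            (N (0 : Fin (r + 1)).succ)) then 1 else 0)
        ≤ h1Dim k G (Subquot (N (0 : Fin (r + 1)).castSucc) (N (0 : Fin (r + 1)).succ))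
          + Module.finrank k (inv (k := k) (G := G) ↥(N 1)) := by
      by_cases hT : IsTrivialFactor k G (Subquot (N (0 : Fin (r + 1)).castSucc)
        (N (0 : Fin (r + 1)).succ))
      · rw [if_pos hT, hfac0]
        have h1 : 1 ≤ Module.finrank k (inv (k := k) (G := G) ↥(N 1)) :=
          one_le_finrank_inv ↥(N 1) ((isTrivialFactor_congr e0).1 hT)
        omega
      · rw [if_neg hT, hfac0]
        omega
    -- assemble
    rw [hcardM, Fin.sum_univ_succ
      (f := fun i : Fin (r + 1) => if IsTrivialFactor k G
        (Subquot (N i.castSucc) (N i.succ)) then 1 else 0),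
      Fin.sum_univ_succ
      (f := fun i : Fin (r + 1) => h1Dim k G (Subquot (N i.castSucc) (N i.succ)))]
    linarith [key, IH, step0]

end main

end St1

/-- If the number of trivial composition factors of `M` equals
`∑ dim H¹(G, Wᵢ)`, `H¹(G, k) = 0`, and `M` has no nonzero trivial submodule (`M^G = 0`),
then `H¹(G, M) = 0`. -/
theorem statement1 (k G : Type) [Field k] [Group G] [Finite G]
    (hk : Subsingleton (groupCohomology.H1 (Rep.trivial k G k)))
    (M : Type) [AddCommGroup M] [Module (MonoidAlgebra k G) M]
    [Module k M] [IsScalarTower k (MonoidAlgebra k G) M] [FiniteDimensional k M]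
    (r : ℕ) (N : Fin (r + 1) → Submodule (MonoidAlgebra k G) M)
    (hmono : Monotone N) (hbot : N 0 = ⊥) (htop : N (Fin.last r) = ⊤)
    (hsimple : ∀ i : Fin r,
      IsSimpleModule (MonoidAlgebra k G) (Subquot (N i.castSucc) (N i.succ)))
    (heq : Nat.card {i : Fin r // IsTrivialFactor k G (Subquot (N i.castSucc) (N i.succ))}
      = ∑ i : Fin r, h1Dim k G (Subquot (N i.castSucc) (N i.succ)))
    (hnosub : @Representation.invariants k G _ _ _ _
      (RestrictScalars.module k (MonoidAlgebra k G) M)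
      (Representation.ofModule (k := k) (G := G) M) =
        (⊥ : Submodule k (RestrictScalars k (MonoidAlgebra k G) M))) :
    Subsingleton (groupCohomology.H1 (grpRep k G M)) := by
  haveI fdM : FiniteDimensional k (grpRep k G M).V := by
    let e : M ≃ₗ[k] RestrictScalars k (MonoidAlgebra k G) M :=
      { toFun := id, invFun := id,
        map_add' := fun _ _ => rfl,
        map_smul' := fun c x => (algebraMap_smul (MonoidAlgebra k G) c x).symm,
        left_inv := fun _ => rfl, right_inv := fun _ => rfl }
    exact Module.Finite.equiv e
  have main_ineq := St1.main (k := k) (G := G) r M N hmono hbot htop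
  have hinv : Module.finrank k (St1.inv (k := k) (G := G) M) = 0 := by
    rw [show St1.inv (k := k) (G := G) M = ⊥ from hnosub]
    open scoped St1 in exact finrank_bot k _
  rw [heq, hinv] at main_ineq
  have hzero : Module.finrank k (St1.H1 (grpRep k G M)) = 0 := by omega
  haveI := St1.fd_H1 (k := k) (G := G) M
  haveI := Module.finrank_zero_iff.1 hzero
  exact (St1.h1CohEquiv (grpRep k G M)).symm.toEquiv.subsingleton
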